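/- Let τ = (√5+1)/2 be the golden ratio. Then lim_{n→∞} η_n = √(2+√5), where η_n = β_n^{1/2} + β_n^{−1/2} and β_n is the unique positive root of φ_n(x) = x^{n+1} − (1 + x + x² + ⋯ + x^{n−1}). In particular: (a) for each n ≥ 1, φ_n has exactly one positive root β_n; (b) the sequence (β_n) is strictly increasing and converges to τ; (c) hence η_n → τ^{1/2} + τ^{−1/2} = √(2+√5). -/

import Mathlib

open Filter

/-- Hoffman's polynomial `φ_n(x) = x^{n+1} - (1 + x + ⋯ + x^{n-1})`. -/
noncomputable def hoffPoly (n : ℕ) (x : ℝ) : ℝ :=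
  x^(n+1) - ∑ k ∈ Finset.range n, x^k

/-- The golden ratio `τ = (√5 + 1)/2`. -/
noncomputable def tau : ℝ := (Real.sqrt 5 + 1) / 2

/-- Auxiliary function: `F n x = ∑_{k<n} x^{-(k+2)}`; for `x > 0`,
`φ_n(x) = x^{n+1} (1 - F n x)`. -/
noncomputable def hoffF (n : ℕ) (x : ℝ) : ℝ := ∑ k ∈ Finset.range n, (x⁻¹)^(k+2)

lemma sqrt5_sq : Real.sqrt 5 ^ 2 = 5 := Real.sq_sqrt (by norm_num)

lemma sqrt5_gt : (2:ℝ) < Real.sqrt 5 := by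
  nlinarith [sqrt5_sq, Real.sqrt_nonneg 5]

lemma tau_gt_one : 1 < tau := by unfold tau; nlinarith [sqrt5_gt]

lemma tau_pos : 0 < tau := lt_trans one_pos tau_gt_one

lemma tau_sq : tau ^ 2 = tau + 1 := by unfold tau; nlinarith [sqrt5_sq]

lemma tau_inv_eq : tau⁻¹ = (Real.sqrt 5 - 1) / 2 := by
  rw [eq_div_iff (by norm_num : (2:ℝ) ≠ 0), inv_mul_eq_div, div_eq_iff (ne_of_gt tau_pos)]
  unfold tau; nlinarith [sqrt5_sq]

lemma tau_inv_sq : tau⁻¹ ^ 2 + tau⁻¹ = 1 := by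
  rw [tau_inv_eq]; nlinarith [sqrt5_sq]

lemma tau_inv_pos : 0 < tau⁻¹ := inv_pos.2 tau_pos

lemma tau_inv_lt_one : tau⁻¹ < 1 := by
  rw [inv_lt_one_iff₀]; right; exact tau_gt_one

lemma hoffPoly_eq (n : ℕ) {x : ℝ} (hx : 0 < x) :
    hoffPoly n x = x^(n+1) * (1 - hoffF n x) := by
  have hx0 : x ≠ 0 := ne_of_gt hx
  unfold hoffPoly hoffF
  rw [mul_sub, mul_one, Finset.mul_sum]
  congr 1
  rw [← Finset.sum_range_reflect (fun k => x ^ k) n]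
  refine Finset.sum_congr rfl fun k hk => ?_
  have hk' : k < n := Finset.mem_range.1 hk
  have h1 : n - 1 - k = n + 1 - (k + 2) := by omega
  rw [inv_pow, h1, pow_sub₀ x hx0 (by omega)]

lemma hoffF_anti (n : ℕ) {x y : ℝ} (hx : 0 < x) (hxy : x ≤ y) :
    hoffF n y ≤ hoffF n x := by
  refine Finset.sum_le_sum fun k _ => ?_
  have hy : 0 < y := lt_of_lt_of_le hx hxy
  have : y⁻¹ ≤ x⁻¹ := by gcongr
  exact pow_le_pow_left₀ (by positivity) this _

lemma hoffF_strict_anti {n : ℕ} (hn : 1 ≤ n) {x y : ℝ} (hx : 0 < x) (hxy : x < y) :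
    hoffF n y < hoffF n x := by
  refine Finset.sum_lt_sum_of_nonempty (by rw [Finset.nonempty_range_iff]; omega) fun k _ => ?_
  have hy : 0 < y := lt_trans hx hxy
  have : y⁻¹ < x⁻¹ := by gcongr
  exact pow_lt_pow_left₀ this (by positivity) (by omega)

lemma hoff_root_iff (n : ℕ) {x : ℝ} (hx : 0 < x) :
    hoffPoly n x = 0 ↔ hoffF n x = 1 := by
  rw [hoffPoly_eq n hx, mul_eq_zero, or_iff_right (pow_ne_zero _ (ne_of_gt hx)), sub_eq_zero,
    eq_comm]

lemma hoffF_mul (n : ℕ) (x : ℝ) :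
    hoffF n x * (1 - x⁻¹) = (x⁻¹)^2 - (x⁻¹)^(n+2) := by
  induction n with
  | zero => simp [hoffF]
  | succ n ih =>
    rw [hoffF, Finset.sum_range_succ, ← hoffF, add_mul, ih]
    ring

lemma hoffF_formula (n : ℕ) {x : ℝ} (hx : x⁻¹ ≠ 1) :
    hoffF n x = ((x⁻¹)^2 - (x⁻¹)^(n+2)) / (1 - x⁻¹) := by
  have h1 : (1:ℝ) - x⁻¹ ≠ 0 := sub_ne_zero.2 (Ne.symm hx)
  rw [eq_div_iff h1, hoffF_mul]

lemma hoffF_tau_lt (n : ℕ) : hoffF n tau < 1 := by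
  have ht1 : tau⁻¹ ≠ 1 := ne_of_lt tau_inv_lt_one
  rw [hoffF_formula n ht1, div_lt_one (by linarith [tau_inv_lt_one])]
  have h1 : (0:ℝ) < tau⁻¹ ^ (n+2) := pow_pos tau_inv_pos _
  nlinarith [tau_inv_sq]

theorem stmt18 (β : ℕ → ℝ)
    (hβ : ∀ n, 1 ≤ n → 0 < β n ∧ hoffPoly n (β n) = 0) :
    -- (a) each `φ_n` has exactly one positive root
    (∀ n, 1 ≤ n → ∃! x : ℝ, 0 < x ∧ hoffPoly n x = 0) ∧
    -- (b) the sequence `(β_n)` is strictly increasing and converges to `τ`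
    (∀ m n, 1 ≤ m → m < n → β m < β n) ∧
    Tendsto β atTop (nhds tau) ∧
    -- (c) hence `η_n = β_n^{1/2} + β_n^{-1/2} → τ^{1/2} + τ^{-1/2} = √(2+√5)`
    Tendsto (fun n => Real.sqrt (β n) + 1 / Real.sqrt (β n)) atTop
      (nhds (Real.sqrt tau + 1 / Real.sqrt tau)) ∧
    Real.sqrt tau + 1 / Real.sqrt tau = Real.sqrt (2 + Real.sqrt 5) := by
  -- basic facts about the roots
  have hpos : ∀ n, 1 ≤ n → 0 < β n := fun n hn => (hβ n hn).1
  have hF1 : ∀ n, 1 ≤ n → hoffF n (β n) = 1 := fun n hn =>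
    (hoff_root_iff n (hpos n hn)).1 (hβ n hn).2
  -- uniqueness of the positive root
  have huniq : ∀ n, 1 ≤ n → ∃! x : ℝ, 0 < x ∧ hoffPoly n x = 0 := by
    intro n hn
    refine ⟨β n, ⟨hpos n hn, (hβ n hn).2⟩, ?_⟩
    rintro y ⟨hy, hy0⟩
    have hyF : hoffF n y = 1 := (hoff_root_iff n hy).1 hy0
    rcases lt_trichotomy y (β n) with h | h | h
    · have := hoffF_strict_anti hn hy h
      rw [hyF, hF1 n hn] at this; exact absurd this (lt_irrefl 1)
    · exact h
    · have := hoffF_strict_anti hn (hpos n hn) h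
      rw [hyF, hF1 n hn] at this; exact absurd this (lt_irrefl 1)
  -- strict monotonicity
  have hstep : ∀ n, 1 ≤ n → β n < β (n + 1) := by
    intro n hn
    by_contra h
    push_neg at h
    have h1 : hoffF (n+1) (β n) ≤ hoffF (n+1) (β (n+1)) :=
      hoffF_anti _ (hpos (n+1) (by omega)) h
    have h2 : hoffF (n+1) (β n) = 1 + ((β n)⁻¹)^(n+2) := by
      rw [hoffF, Finset.sum_range_succ, ← hoffF, hF1 n hn]
    have h3 : (0:ℝ) < ((β n)⁻¹)^(n+2) := pow_pos (inv_pos.2 (hpos n hn)) _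
    rw [h2, hF1 (n+1) (by omega)] at h1
    linarith
  have hmono : ∀ m n, 1 ≤ m → m < n → β m < β n := by
    intro m n hm hmn
    induction n with
    | zero => omega
    | succ n ih =>
      rcases Nat.lt_or_ge m n with h | h
      · exact lt_trans (ih h) (hstep n (by omega))
      · have : m = n := by omega
        subst this; exact hstep m hm
  -- upper bound : β n < τ
  have hub : ∀ n, 1 ≤ n → β n < tau := by
    intro n hn
    by_contra h
    push_neg at h
    have := hoffF_anti n tau_pos h
    rw [hF1 n hn] at this
    linarith [hoffF_tau_lt n]
  -- lower bound : 1 ≤ β n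
  have hlb : ∀ n, 1 ≤ n → 1 ≤ β n := by
    intro n hn
    by_contra h
    push_neg at h
    have h1 : hoffF n 1 < hoffF n (β n) := hoffF_strict_anti hn (hpos n hn) h
    have h2 : hoffF n 1 = n := by simp [hoffF]
    rw [h2, hF1 n hn] at h1
    have : (1:ℝ) ≤ (n:ℝ) := by exact_mod_cast hn
    linarith
  -- convergence to τ
  have htend : Tendsto β atTop (nhds tau) := by
    rw [tendsto_order]
    constructor
    · intro b hb
      have hβ1 : β 1 = 1 := by
        have h := hF1 1 le_rfl
        have heq : hoffF 1 (β 1) = (β 1)⁻¹ ^ 2 := by simp [hoffF]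
        rw [heq] at h
        have hp := hpos 1 le_rfl
        have h2 : (β 1)⁻¹ = 1 := by nlinarith [inv_pos.2 hp]
        exact (inv_eq_one.mp h2)
      rcases le_or_gt b 1 with hb1 | hb1
      · filter_upwards [eventually_ge_atTop 2] with n hn
        have : β 1 < β n := hmono 1 n le_rfl (by omega)
        rw [hβ1] at this
        linarith
      · -- 1 < b < τ
        set r : ℝ := b⁻¹ with hr
        have hb0 : 0 < b := lt_trans one_pos hb1
        have hr0 : 0 < r := inv_pos.2 hb0
        have hr1 : r < 1 := by rw [hr, inv_lt_one_iff₀]; right; exact hb1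
        have hrt : tau⁻¹ < r := by rw [hr]; gcongr
        have hδ : 0 < r^2 + r - 1 := by nlinarith [tau_inv_sq, tau_inv_pos]
        have hlim : Tendsto (fun n : ℕ => r ^ n) atTop (nhds 0) :=
          tendsto_pow_atTop_nhds_zero_of_lt_one hr0.le hr1
        filter_upwards [hlim.eventually_lt_const hδ, eventually_ge_atTop 1] with n hn hn1
        by_contra h
        push_neg at h
        have h1 : hoffF n b ≤ hoffF n (β n) := hoffF_anti n (hpos n hn1) h
        rw [hF1 n hn1] at h1
        have hFb : 1 < hoffF n b := by
          rw [hoffF_formula n (ne_of_lt hr1), one_lt_div (by linarith)]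
          have hpow : r ^ (n+2) ≤ r ^ n := by
            calc r ^ (n+2) = r^n * r^2 := by ring
            _ ≤ r^n * 1 := by
                have : r^2 ≤ 1 := by nlinarith
                nlinarith [pow_pos hr0 n]
            _ = r^n := by ring
          have : (r:ℝ)^(n+2) < r^2 + r - 1 := lt_of_le_of_lt hpow hn
          nlinarith
        linarith
    · intro b hb
      filter_upwards [eventually_ge_atTop 1] with n hn
      exact lt_trans (hub n hn) hb
  -- continuity for part (c)
  have hsq : Real.sqrt tau > 0 := Real.sqrt_pos.2 tau_pos
  have hsqrt : Tendsto (fun n => Real.sqrt (β n)) atTop (nhds (Real.sqrt tau)) := htend.sqrt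
  have hctend : Tendsto (fun n => Real.sqrt (β n) + 1 / Real.sqrt (β n)) atTop
      (nhds (Real.sqrt tau + 1 / Real.sqrt tau)) :=
    hsqrt.add (tendsto_const_nhds.div hsqrt (ne_of_gt hsq))
  -- the algebraic identity
  have hkey : (Real.sqrt tau + 1 / Real.sqrt tau) ^ 2 = 2 + Real.sqrt 5 := by
    have h2 : Real.sqrt tau * Real.sqrt tau = tau := Real.mul_self_sqrt tau_pos.le
    have ht0 : tau ≠ 0 := ne_of_gt tau_pos
    have hinv : 1 / tau = tau - 1 := by
      rw [eq_sub_iff_add_eq, div_add' _ _ _ ht0, div_eq_iff ht0]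
      nlinarith [tau_sq]
    have hexp : (Real.sqrt tau + 1 / Real.sqrt tau) ^ 2 = tau + 2 + 1 / tau := by
      field_simp
      rw [Real.sq_sqrt tau_pos.le]
      ring
    rw [hexp, hinv]
    unfold tau; ring
  have hfin : Real.sqrt tau + 1 / Real.sqrt tau = Real.sqrt (2 + Real.sqrt 5) := by
    rw [← hkey, Real.sqrt_sq (by positivity)]
  exact ⟨huniq, hmono, htend, hctend, hfin⟩
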